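/- Let p be prime, q = p^d, 3 ≤ l ≤ q, and let M over F_p be the (q-l+1) × (q-1) matrix of coefficient vectors of (1+x)^l - 1, x(1+x)^l, ..., x^{q-l-1}(1+x)^l, x^{q-l}(1+x)^l - x^q. Then the rank of M over F_p is at least q - l - 2. -/

import Mathlib

open Polynomial

/-- The `i`-th row polynomial of the paper's matrix `M` (equation (3)):
`(1+x)^l - 1` for `i = 0`, `x^(q-l)(1+x)^l - x^q` for `i = q-l`, and
`x^i (1+x)^l` for `0 < i < q-l`. -/
noncomputable def rowPoly (R : Type*) [CommRing R] (q l i : ℕ) : R[X] :=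
  if i = 0 then (1 + X) ^ l - 1
  else if i = q - l then X ^ (q - l) * (1 + X) ^ l - X ^ q
  else X ^ i * (1 + X) ^ l

/-- The paper's `(q-l+1) × (q-1)` matrix `M`: the `(i, j)` entry is the
coefficient of `x^(j+1)` in the `i`-th row polynomial, i.e. the rows are the
coefficient vectors (in degrees `1` through `q-1`) of the polynomials
`(1+x)^l - 1, x(1+x)^l, ..., x^(q-l-1)(1+x)^l, x^(q-l)(1+x)^l - x^q`. -/
noncomputable def paperM (R : Type*) [CommRing R] (q l : ℕ) :
    Matrix (Fin (q - l + 1)) (Fin (q - 1)) R :=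
  fun i j => (rowPoly R q l i).coeff ((j : ℕ) + 1)

/-- For `p` prime, `q = p^d`, `3 ≤ l ≤ q`, the rank of `M` over
`F_p` is at least `q - l - 2`. -/
theorem paperM_rank_zmod_lower (p d l q : ℕ) (hp : p.Prime) (hd : 0 < d)
    (hq : q = p ^ d) (hl : 3 ≤ l) (hlq : l ≤ q) :
    q - l - 2 ≤ (paperM (ZMod p) q l).rank := by
  haveI : Fact p.Prime := ⟨hp⟩
  set k := q - l - 2 with hk
  have hq1 : 2 ≤ q := hq ▸ (hp.two_le.trans (Nat.le_self_pow hd.ne' p))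
  -- the row/column selection maps
  have hfin1 : ∀ i : Fin k, (i : ℕ) + 1 < q - l + 1 := by
    intro i
    have := i.isLt
    omega
  have hfin2 : ∀ i : Fin k, (i : ℕ) < q - 1 := by
    intro i
    have := i.isLt
    omega
  set f : Fin k → Fin (q - l + 1) := fun i => ⟨(i : ℕ) + 1, hfin1 i⟩ with hf
  set g : Fin k → Fin (q - 1) := fun i => ⟨(i : ℕ), hfin2 i⟩ with hg
  set M := paperM (ZMod p) q l with hM
  -- selection matrices
  set F : Matrix (Fin k) (Fin (q - l + 1)) (ZMod p) :=
    fun i a => if a = f i then 1 else 0 with hF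
  set E : Matrix (Fin (q - 1)) (Fin k) (ZMod p) :=
    fun j i => if j = g i then 1 else 0 with hE
  have hsub : F * (M * E) = M.submatrix f g := by
    ext i j
    simp only [Matrix.mul_apply, Matrix.submatrix_apply]
    simp only [hF, hE]
    rw [Finset.sum_eq_single (f i)]
    · simp only [if_pos rfl, one_mul]
      rw [Finset.sum_eq_single (g j)]
      · simp
      · intro b _ hb; simp [if_neg hb]
      · intro h; exact absurd (Finset.mem_univ _) h
    · intro b _ hb; simp [if_neg hb]
    · intro h; exact absurd (Finset.mem_univ _) h
  -- entries of the submatrix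
  have hentry : ∀ i j : Fin k, (M.submatrix f g) i j =
      (((1 : (ZMod p)[X]) + X) ^ l).coeff ((j : ℕ) - (i : ℕ)) *
        (if (i : ℕ) ≤ (j : ℕ) then 1 else 0) := by
    intro i j
    have hi0 : (i : ℕ) + 1 ≠ 0 := by omega
    have hiq : (i : ℕ) + 1 ≠ q - l := by
      have := i.isLt; omega
    simp only [Matrix.submatrix_apply, hM, paperM, rowPoly, hf, hg, if_neg hi0, if_neg hiq]
    rw [mul_comm, coeff_mul_X_pow']
    by_cases h : (i : ℕ) ≤ (j : ℕ)
    · rw [if_pos (by omega), if_pos h, mul_one]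
      congr 1
      omega
    · rw [if_neg (by omega), if_neg h, mul_zero]
  -- the submatrix is upper triangular with 1's on the diagonal
  have htri : (M.submatrix f g).BlockTriangular id := by
    intro i j hij
    rw [hentry]
    have : ¬ ((i : ℕ) ≤ (j : ℕ)) := by exact_mod_cast Nat.not_le.mpr hij
    simp [this]
  have hdiag : ∀ i : Fin k, (M.submatrix f g) i i = 1 := by
    intro i
    rw [hentry]
    simp [coeff_zero_eq_eval_zero]
  have hdet : (M.submatrix f g).det = 1 := by
    rw [Matrix.det_of_upperTriangular htri]
    exact Finset.prod_eq_one fun i _ => hdiag i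
  have hrank : (M.submatrix f g).rank = k := by
    rw [Matrix.rank_of_isUnit _ (by rw [Matrix.isUnit_iff_isUnit_det, hdet]; exact isUnit_one)]
    exact Fintype.card_fin k
  calc k = (M.submatrix f g).rank := hrank.symm
    _ = (F * (M * E)).rank := by rw [hsub]
    _ ≤ (M * E).rank := Matrix.rank_mul_le_right _ _
    _ ≤ M.rank := Matrix.rank_mul_le_left _ _
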